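/- Let (A, ¯(), ⊕, ·, 1) be an IMM algebra and suppose the element 1̄⊕1 has a two-sided multiplicative inverse h (i.e., (1̄⊕1)·h = 1 = h·(1̄⊕1)). Define p(a,b,c) = h·((b̄·a)⊕(b·c)). Then (A, p, 1̄, 1̄⊕1, 1) is a mobi algebra, and it is the unique mobi algebra structure on A with constants 1̄, 1̄⊕1, 1 satisfying 1̄ ⊕ p(a,b,c) = (b̄·a)⊕(b·c) for all a, b, c ∈ A. -/
import Mathlib


/-- A mobi algebra: a set with a ternary operation `p` and constants `e0`, `half`, `e1`. -/
structure MobiAlgebra (A : Type*) where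
  p : A → A → A → A
  e0 : A
  half : A
  e1 : A
  A1 : p e1 half e0 = half
  A2 : ∀ a, p e0 a e1 = a
  A3 : ∀ a b, p a b a = a
  A4 : ∀ a b, p a e0 b = a
  A5 : ∀ a b, p a e1 b = b
  A6 : ∀ a a' b, p a half b = p a' half b → a = a'
  A7 : ∀ a b c1 c2 c3, p a (p c1 c2 c3) b = p (p a c1 b) c2 (p a c3 b)
  A8 : ∀ a1 a2 b1 b2 c,
    p (p a1 c b1) half (p a2 c b2) = p (p a1 half a2) c (p b1 half b2)

/-- An involutive medial monoid (IMM) algebra. -/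
structure IMM (B : Type*) where
  inv : B → B
  oplus : B → B → B
  mul : B → B → B
  one : B
  B1 : ∀ a, oplus a a = a
  B2 : ∀ a b, oplus a b = oplus b a
  B3 : ∀ a b c d, oplus (oplus a b) (oplus c d) = oplus (oplus a c) (oplus b d)
  B4 : ∀ a b c, mul a (mul b c) = mul (mul a b) c
  B5 : ∀ a, mul a one = a
  B5' : ∀ a, mul one a = a
  B6 : ∀ a b c, mul a (oplus b c) = oplus (mul a b) (mul a c)
  B6' : ∀ a b c, mul (oplus a b) c = oplus (mul a c) (mul b c)
  B7 : ∀ a, inv (inv a) = a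
  B8 : ∀ a b, inv (oplus a b) = oplus (inv a) (inv b)
  B9 : ∀ a, mul a (inv one) = inv one
  B9' : ∀ a, mul (inv one) a = inv one
  B10 : ∀ a, oplus (inv a) a = oplus (inv one) one

namespace IMMaux

variable {A : Type*} (I : IMM A) (h : A)

/-- q a b c = b̄·a ⊕ b·c -/
def q (a b c : A) : A := I.oplus (I.mul (I.inv b) a) (I.mul b c)

/-- the candidate mobi operation -/
def pp (a b c : A) : A := I.mul h (q I a b c)

lemma halfmul (x : A) :
    I.mul (I.oplus (I.inv I.one) I.one) x = I.oplus (I.inv I.one) x := by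
  rw [I.B6', I.B9', I.B5']

lemma mulhalf (x : A) :
    I.mul x (I.oplus (I.inv I.one) I.one) = I.oplus (I.inv I.one) x := by
  rw [I.B6, I.B9, I.B5]

lemma invhalf : I.inv (I.oplus (I.inv I.one) I.one) = I.oplus (I.inv I.one) I.one := by
  rw [I.B8, I.B7, I.B2]

variable (h2 : I.mul h (I.oplus (I.inv I.one) I.one) = I.one)
variable (h1 : I.mul (I.oplus (I.inv I.one) I.one) h = I.one)

include h2 in
lemma hx (x : A) : I.mul h (I.oplus (I.inv I.one) x) = x := by
  rw [← halfmul, I.B4, h2, I.B5']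

include h2 in
lemma cancel {x y : A} (e : I.oplus (I.inv I.one) x = I.oplus (I.inv I.one) y) :
    x = y := by
  rw [← hx I h h2 x, ← hx I h h2 y, e]

include h1 h2 in
lemma hcomm (x : A) : I.mul h x = I.mul x h := by
  apply cancel I h h2
  have L : I.mul (I.oplus (I.inv I.one) I.one) (I.mul h x) = x := by
    rw [I.B4, h1, I.B5']
  have R : I.mul (I.oplus (I.inv I.one) I.one) (I.mul x h) = x := by
    rw [halfmul, ← mulhalf, ← I.B4, h2, I.B5]
  rw [← halfmul I (I.mul h x), ← halfmul I (I.mul x h), L, R]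

include h1 h2 in
lemma hpull (x y : A) : I.mul x (I.mul h y) = I.mul h (I.mul x y) := by
  rw [I.B4, ← hcomm I h h2 h1, ← I.B4]

include h1 in
lemma halfp (a b c : A) : I.oplus (I.inv I.one) (pp I h a b c) = q I a b c := by
  rw [pp, ← halfmul, I.B4, h1, I.B5']

include h2 in
lemma pmid (x y : A) : pp I h x (I.oplus (I.inv I.one) I.one) y = I.oplus x y := by
  rw [pp, q, invhalf, halfmul, halfmul, I.B3, I.B1, hx I h h2]

include h2 in
lemma ocancel {a a' b : A} (e : I.oplus a b = I.oplus a' b) : a = a' := by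
  have key : ∀ u : A, I.oplus (I.oplus u b) (I.oplus (I.inv I.one) (I.inv b)) =
      I.oplus (I.inv I.one) (I.oplus u I.one) := by
    intro u
    rw [I.B3, I.B2 b, I.B10, I.B2 u, I.B3, I.B1]
  have e2 : I.oplus a I.one = I.oplus a' I.one := by
    apply cancel I h h2
    rw [← key a, ← key a', e]
  have e3 : I.inv a = I.inv a' := by
    apply cancel I h h2
    have := congrArg I.inv e2
    rwa [I.B8, I.B8, I.B2 (I.inv a), I.B2 (I.inv a')] at this
  have := congrArg I.inv e3
  rwa [I.B7, I.B7] at this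

include h2 in
lemma invpp (a b c : A) :
    I.inv (pp I h a b c) = pp I h (I.inv a) b (I.inv c) := by
  symm
  apply ocancel I h h2 (b := pp I h a b c)
  rw [I.B10 (pp I h a b c)]
  show I.oplus (I.mul h _) (I.mul h _) = _
  rw [← I.B6, q, q, I.B3, ← I.B6, ← I.B6, I.B10 a, I.B10 c, mulhalf, mulhalf,
    I.B3, I.B1, I.B10 b, hx I h h2]

include h2 in
lemma pA1 : pp I h I.one (I.oplus (I.inv I.one) I.one) (I.inv I.one)
    = I.oplus (I.inv I.one) I.one := by
  rw [pp, q, invhalf, I.B5, halfmul, I.B1,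
    I.B2 (I.oplus (I.inv I.one) I.one) (I.inv I.one), hx I h h2]

include h2 in
lemma pA2 (a : A) : pp I h (I.inv I.one) a I.one = a := by
  rw [pp, q, I.B9, I.B5, hx I h h2]

include h2 in
lemma pA3 (a b : A) : pp I h a b a = a := by
  rw [pp, q, ← I.B6', I.B10 b, halfmul, hx I h h2]

include h2 in
lemma pA4 (a b : A) : pp I h a (I.inv I.one) b = a := by
  rw [pp, q, I.B7, I.B5', I.B9', I.B2 a (I.inv I.one), hx I h h2]

include h2 in
lemma pA5 (a b : A) : pp I h a I.one b = b := by
  rw [pp, q, I.B9', I.B5', hx I h h2]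

include h2 in
lemma pA6 (a a' b : A)
    (e : pp I h a (I.oplus (I.inv I.one) I.one) b
       = pp I h a' (I.oplus (I.inv I.one) I.one) b) : a = a' := by
  rw [pmid I h h2, pmid I h h2] at e
  exact ocancel I h h2 e

lemma inner7 (a b c1 c2 c3 : A) :
    I.oplus (I.mul (q I (I.inv c1) c2 (I.inv c3)) a) (I.mul (q I c1 c2 c3) b)
    = I.oplus (I.mul (I.inv c2) (q I a c1 b)) (I.mul c2 (q I a c3 b)) := by
  simp only [q]
  rw [I.B6', I.B6', I.B3, I.B6, I.B6, I.B4, I.B4, I.B4, I.B4]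

include h1 h2 in
lemma pA7 (a b c1 c2 c3 : A) :
    pp I h a (pp I h c1 c2 c3) b
    = pp I h (pp I h a c1 b) c2 (pp I h a c3 b) := by
  apply cancel I h h2
  rw [halfp I h h1, halfp I h h1]
  show I.oplus (I.mul (I.inv (pp I h c1 c2 c3)) a) (I.mul (pp I h c1 c2 c3) b)
    = I.oplus (I.mul (I.inv c2) (pp I h a c1 b)) (I.mul c2 (pp I h a c3 b))
  rw [invpp I h h2]
  simp only [pp]
  rw [← I.B4, ← I.B4, ← I.B6, hpull I h h2 h1, hpull I h h2 h1, ← I.B6, inner7]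

include h2 in
lemma pA8 (a1 a2 b1 b2 c : A) :
    pp I h (pp I h a1 c b1) (I.oplus (I.inv I.one) I.one) (pp I h a2 c b2)
    = pp I h (pp I h a1 (I.oplus (I.inv I.one) I.one) a2) c
        (pp I h b1 (I.oplus (I.inv I.one) I.one) b2) := by
  rw [pmid I h h2, pmid I h h2, pmid I h h2]
  simp only [pp, q]
  rw [← I.B6, I.B3, ← I.B6, ← I.B6]

end IMMaux

/-- Corollary 6.4: if in an IMM algebra 1̄⊕1 has a two-sided inverse h, then
p(a,b,c) = h·((b̄·a)⊕(b·c)) makes (A,p,1̄,1̄⊕1,1) a mobi algebra, and it is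
the unique mobi algebra with these constants satisfying
1̄ ⊕ p(a,b,c) = (b̄·a)⊕(b·c). -/
theorem IMM_to_mobi {A : Type*} (I : IMM A) (h : A)
    (h1 : I.mul (I.oplus (I.inv I.one) I.one) h = I.one)
    (h2 : I.mul h (I.oplus (I.inv I.one) I.one) = I.one) :
    (∃ M : MobiAlgebra A,
      M.p = (fun a b c =>
        I.mul h (I.oplus (I.mul (I.inv b) a) (I.mul b c))) ∧
      M.e0 = I.inv I.one ∧
      M.half = I.oplus (I.inv I.one) I.one ∧
      M.e1 = I.one ∧
      (∀ a b c, I.oplus (I.inv I.one) (M.p a b c) =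
        I.oplus (I.mul (I.inv b) a) (I.mul b c))) ∧
    (∀ M : MobiAlgebra A,
      M.e0 = I.inv I.one →
      M.half = I.oplus (I.inv I.one) I.one →
      M.e1 = I.one →
      (∀ a b c, I.oplus (I.inv I.one) (M.p a b c) =
        I.oplus (I.mul (I.inv b) a) (I.mul b c)) →
      M.p = (fun a b c =>
        I.mul h (I.oplus (I.mul (I.inv b) a) (I.mul b c)))) := by
  open IMMaux in
  refine ⟨⟨{ p := fun a b c => I.mul h (I.oplus (I.mul (I.inv b) a) (I.mul b c))
             e0 := I.inv I.one
             half := I.oplus (I.inv I.one) I.one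
             e1 := I.one
             A1 := pA1 I h h2
             A2 := pA2 I h h2
             A3 := pA3 I h h2
             A4 := pA4 I h h2
             A5 := pA5 I h h2
             A6 := pA6 I h h2
             A7 := fun a b c1 c2 c3 => pA7 I h h2 h1 a b c1 c2 c3
             A8 := fun a1 a2 b1 b2 c => pA8 I h h2 a1 a2 b1 b2 c },
          rfl, rfl, rfl, rfl, fun a b c => halfp I h h1 a b c⟩, ?_⟩
  intro M _ _ _ hq
  funext a b c
  apply cancel I h h2
  rw [hq a b c]
  exact (halfp I h h1 a b c).symm
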